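/- arXiv:1102.2871 — 3 statements merged into one kernel-verified Lean document; each statement's English description precedes it below -/
import Mathlib

section
/- Let μ > 0, k > 0, p > 0 with p ≠ 1, and f_p : (0,∞) → ℝ continuous. Define G(W) = W - 1 - ln W for W > 0 and F(Z) = ∫₁^Z (μ - f_p(z)) dz/z for Z > 0. Let α₊ = 1/(√p+1) and α₋ = 1/(√p-1), and set L(W,Z) = 2kμ G(W) + (α₊² + α₋²) F(Z). Then along any positive solution of Ẇ = -(1/k)W(μ - f_p(Z)) - (μ/k)W(W-1), Ż = -pZ(μ - f_p(Z)) - (p-1)μZ(W-1), one has d/dt L(W(t),Z(t)) = -(μ(W-1) + α₊√p(μ - f_p(Z)))² - (μ(W-1) + α₋√p(μ - f_p(Z)))². -/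
theorem stmt_7 (μ k p : ℝ) (hμ : 0 < μ) (hk : 0 < k) (hp : 0 < p) (hp1 : p ≠ 1)
    (f : ℝ → ℝ) (hf : ContinuousOn f (Set.Ioi 0))
    (W Z : ℝ → ℝ) (hWpos : ∀ t, 0 < W t) (hZpos : ∀ t, 0 < Z t)
    (hW : ∀ t : ℝ, HasDerivAt W
      (-(1/k) * W t * (μ - f (Z t)) - (μ/k) * W t * (W t - 1)) t)
    (hZ : ∀ t : ℝ, HasDerivAt Z
      (-p * Z t * (μ - f (Z t)) - (p - 1) * μ * Z t * (W t - 1)) t)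
    (G F : ℝ → ℝ)
    (hG : ∀ w : ℝ, G w = w - 1 - Real.log w)
    (hF : ∀ z : ℝ, F z = ∫ s in (1:ℝ)..z, (μ - f s) / s)
    (αp αm : ℝ) (hαp : αp = 1/(Real.sqrt p + 1)) (hαm : αm = 1/(Real.sqrt p - 1)) :
    ∀ t : ℝ, HasDerivAt (fun t => 2*k*μ * G (W t) + (αp^2 + αm^2) * F (Z t))
      (-(μ*(W t - 1) + αp*Real.sqrt p*(μ - f (Z t)))^2
       - (μ*(W t - 1) + αm*Real.sqrt p*(μ - f (Z t)))^2) t := by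
  intro t
  set g : ℝ → ℝ := fun s => (μ - f s) / s with hg
  have hgcont : ContinuousOn g (Set.Ioi 0) := by
    apply ContinuousOn.div
    · exact (continuousOn_const.sub hf)
    · exact continuousOn_id
    · intro x hx; exact ne_of_gt hx
  set W' : ℝ := -(1/k) * W t * (μ - f (Z t)) - (μ/k) * W t * (W t - 1) with hW'
  set Z' : ℝ := -p * Z t * (μ - f (Z t)) - (p - 1) * μ * Z t * (W t - 1) with hZ'
  -- derivative of G ∘ W
  have hGW : HasDerivAt (fun t => G (W t)) (W' - W' / W t) t := by
    have : (fun t => G (W t)) = fun t => W t - 1 - Real.log (W t) := by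
      funext u; rw [hG]
    rw [this]
    have hlog : HasDerivAt (fun t => Real.log (W t)) (W' / W t) t := by
      have h := (Real.hasDerivAt_log (ne_of_gt (hWpos t))).comp t (hW t)
      convert h using 1 <;> try rfl
      rw [hW']
      field_simp
    exact ((hW t).sub_const 1).sub hlog
  -- derivative of F ∘ Z
  have hFZ : HasDerivAt (fun t => F (Z t)) (g (Z t) * Z') t := by
    have hFd : HasDerivAt F (g (Z t)) (Z t) := by
      have hFe : F = fun z => ∫ s in (1:ℝ)..z, g s := by funext z; rw [hF]
      rw [hFe]
      have hint : IntervalIntegrable g MeasureTheory.volume 1 (Z t) := by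
        apply ContinuousOn.intervalIntegrable
        apply hgcont.mono
        intro x hx
        rcases Set.mem_uIcc.mp hx with h | h
        · exact lt_of_lt_of_le one_pos h.1
        · exact lt_of_lt_of_le (hZpos t) h.1
      have hmeas : StronglyMeasurableAtFilter g (nhds (Z t)) :=
        hgcont.stronglyMeasurableAtFilter isOpen_Ioi (Z t) (hZpos t)
      have hca : ContinuousAt g (Z t) :=
        hgcont.continuousAt (isOpen_Ioi.mem_nhds (hZpos t))
      exact intervalIntegral.integral_hasDerivAt_right hint hmeas hca
    exact hFd.comp t (hZ t)
  have hmain := (hGW.const_mul (2*k*μ)).add (hFZ.const_mul (αp^2 + αm^2))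
  convert hmain using 1 <;> try rfl
  -- algebraic identity
  set s := Real.sqrt p with hsdef
  have hs : s ^ 2 = p := Real.sq_sqrt hp.le
  have hs1 : s - 1 ≠ 0 := by
    intro h
    exact hp1 (Real.sqrt_eq_one.mp (by rw [← hsdef]; linarith))
  have hs2 : s + 1 ≠ 0 := by
    have : 0 ≤ s := Real.sqrt_nonneg p
    positivity
  rw [hαp, hαm, hW', hZ', hg]
  have hWne := ne_of_gt (hWpos t)
  have hZne := ne_of_gt (hZpos t)
  have hkne := ne_of_gt hk
  rw [← hs]
  field_simp
  ring
end

section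
/- With notations as above (L, α₊, α₋ from the Lyapunov construction with p ≠ 1), there exists ω > 0 such that along solutions of the system, d/dt L(W,Z) ≤ -ω(μ²(W-1)² + α₊² p (μ - f_p(Z))²). -/
lemma key_quad (c₁ c₂ : ℝ) (h : c₁ ≠ c₂) : ∃ ω > 0, ∀ a u : ℝ,
    ω * (a^2 + c₁^2*u^2) ≤ (a+c₁*u)^2 + (a+c₂*u)^2 := by
  refine ⟨(c₁-c₂)^2/(2+4*c₁^2+4*c₂^2), div_pos (sq_pos_of_ne_zero (sub_ne_zero.mpr h)) (by positivity), ?_⟩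
  intro a u
  rw [div_mul_eq_mul_div, div_le_iff₀ (by positivity)]
  nlinarith [sq_nonneg (a+c₁*u), sq_nonneg (a+c₂*u), sq_nonneg ((c₁-c₂)*u),
    sq_nonneg (2*a + (c₁+c₂)*u), sq_nonneg (c₁*u), sq_nonneg (c₂*u), sq_nonneg a,
    sq_nonneg u, sq_nonneg (c₁-c₂), sq_nonneg (c₁+c₂), sq_nonneg ((c₁-c₂)*a),
    sq_nonneg (c₁*a), sq_nonneg (c₂*a), sq_nonneg ((c₁^2-c₂^2)*u),
    sq_nonneg (a*(c₁-c₂) + (c₁^2-c₂^2)*u), sq_nonneg (a*(c₁-c₂) - (c₁^2-c₂^2)*u)]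

theorem stmt_8 (μ k p : ℝ) (hμ : 0 < μ) (hk : 0 < k) (hp : 0 < p) (hp1 : p ≠ 1)
    (f : ℝ → ℝ) (hf : ContinuousOn f (Set.Ioi 0))
    (W Z : ℝ → ℝ) (hWpos : ∀ t, 0 < W t) (hZpos : ∀ t, 0 < Z t)
    (hW : ∀ t : ℝ, HasDerivAt W
      (-(1/k) * W t * (μ - f (Z t)) - (μ/k) * W t * (W t - 1)) t)
    (hZ : ∀ t : ℝ, HasDerivAt Z
      (-p * Z t * (μ - f (Z t)) - (p - 1) * μ * Z t * (W t - 1)) t)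
    (G F : ℝ → ℝ)
    (hG : ∀ w : ℝ, G w = w - 1 - Real.log w)
    (hF : ∀ z : ℝ, F z = ∫ s in (1:ℝ)..z, (μ - f s) / s)
    (αp αm : ℝ) (hαp : αp = 1/(Real.sqrt p + 1)) (hαm : αm = 1/(Real.sqrt p - 1)) :
    ∃ ω > 0, ∀ t : ℝ,
      deriv (fun t => 2*k*μ * G (W t) + (αp^2 + αm^2) * F (Z t)) t ≤
        -ω * (μ^2*(W t - 1)^2 + αp^2 * p * (μ - f (Z t))^2) := by
  set s : ℝ := Real.sqrt p with hsdef
  have hs0 : 0 ≤ s := Real.sqrt_nonneg p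
  have hs2 : s^2 = p := Real.sq_sqrt hp.le
  have hs1 : s ≠ 1 := fun h => hp1 (by rw [← hs2, h]; norm_num)
  have hsp1 : s + 1 ≠ 0 := by positivity
  have hsm1 : s - 1 ≠ 0 := sub_ne_zero.mpr hs1
  have hsne : s ≠ 0 := by
    intro h; rw [h] at hs2; simp at hs2; exact hp.ne' hs2.symm
  have hαne : αp * s ≠ αm * s := by
    rw [hαp, hαm]
    intro h
    have := mul_right_cancel₀ hsne h
    rw [div_eq_div_iff hsp1 hsm1] at this
    linarith
  obtain ⟨ω, hω, hkey⟩ := key_quad (αp * s) (αm * s) hαne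
  -- algebraic identities
  have h1 : 2*(αp*s + αm*s) = 2 + (αp^2+αm^2)*(p-1) := by
    rw [hαp, hαm]
    field_simp
    linear_combination (2*s^2+2)*hs2
  have h2 : (αp*s)^2 + (αm*s)^2 = p*(αp^2+αm^2) := by
    linear_combination (αp^2+αm^2)*hs2
  refine ⟨ω, hω, fun t => ?_⟩
  have hWt0 : W t ≠ 0 := (hWpos t).ne'
  have hZt0 : Z t ≠ 0 := (hZpos t).ne'
  set W' : ℝ := -(1/k) * W t * (μ - f (Z t)) - (μ/k) * W t * (W t - 1) with hW'def
  set Z' : ℝ := -p * Z t * (μ - f (Z t)) - (p - 1) * μ * Z t * (W t - 1) with hZ'def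
  -- derivative of G ∘ W
  have hGW : HasDerivAt (fun t => G (W t)) (W' - W' / W t) t := by
    have : (fun t => G (W t)) = fun t => W t - 1 - Real.log (W t) := funext fun t => hG (W t)
    rw [this]
    exact ((hW t).sub_const 1).sub ((hW t).log hWt0)
  -- derivative of F at Z t
  have hg : ContinuousOn (fun x : ℝ => (μ - f x) / x) (Set.Ioi 0) :=
    (continuousOn_const.sub hf).div continuousOn_id (fun x hx => ne_of_gt hx)
  have hsub : Set.uIcc (1:ℝ) (Z t) ⊆ Set.Ioi 0 := by
    intro x hx
    have := hx.1
    simp only [Set.mem_Ioi]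
    calc (0:ℝ) < min 1 (Z t) := lt_min one_pos (hZpos t)
    _ ≤ x := by simpa [Set.uIcc, min_def] using hx.1
  have hFd : HasDerivAt F ((μ - f (Z t)) / Z t) (Z t) := by
    have hFeq : F = fun z => ∫ x in (1:ℝ)..z, (μ - f x) / x := funext hF
    rw [hFeq]
    refine intervalIntegral.integral_hasDerivAt_right
      ((hg.mono hsub).intervalIntegrable) ?_ ?_
    · exact (hg.stronglyMeasurableAtFilter isOpen_Ioi) _ (hZpos t)
    · exact hg.continuousAt (isOpen_Ioi.mem_nhds (hZpos t))
  have hFZ : HasDerivAt (fun t => F (Z t)) ((μ - f (Z t)) / Z t * Z') t :=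
    hFd.comp t (hZ t)
  have hD : HasDerivAt (fun t => 2*k*μ * G (W t) + (αp^2 + αm^2) * F (Z t))
      (2*k*μ * (W' - W' / W t) + (αp^2 + αm^2) * ((μ - f (Z t)) / Z t * Z')) t :=
    (hGW.const_mul (2*k*μ)).add (hFZ.const_mul (αp^2+αm^2))
  rw [hD.deriv]
  set A : ℝ := μ * (W t - 1) with hA
  set u : ℝ := μ - f (Z t) with hu
  have hident : 2*k*μ * (W' - W' / W t) + (αp^2 + αm^2) * (u / Z t * Z')
      = -((A + (αp*s)*u)^2 + (A + (αm*s)*u)^2) := by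
    rw [hW'def, hZ'def, hαp, hαm, ← hs2]
    field_simp
    ring
  rw [hident]
  have hc : (αp*s)^2 = αp^2 * p := by linear_combination αp^2 * hs2
  have h3 : -ω * (μ^2*(W t - 1)^2 + αp^2 * p * (μ - f (Z t))^2)
      = -(ω * (A^2 + (αp*s)^2*u^2)) := by
    rw [hA, hu]
    linear_combination (ω*(μ - f (Z t))^2) * hc
  rw [h3]
  exact neg_le_neg (hkey A u)
end

section
/- Let T > 0 and let V, W : ℝ → (0,∞) be T-periodic continuous functions satisfying Ẇ = (√(βτ)/k) W^{1/2}(V - W) (equivalently Ẇ = (Λ(W,0)/k)(V-W) with Λ(W,0) = √(βτW)) for constants β, τ, k > 0. Then ∫₀ᵀ √(V(s)) ds ≤ ∫₀ᵀ √(W(s)) ds ≤ T √((1/T)∫₀ᵀ V(s) ds). -/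
open intervalIntegral Real

/-- Cauchy–Schwarz for interval integrals of continuous functions. -/
lemma cs_aux (T : ℝ) (hT : 0 < T) (f g : ℝ → ℝ) (hf : Continuous f) (hg : Continuous g)
    (hA : 0 < ∫ s in (0:ℝ)..T, f s ^ 2) :
    (∫ s in (0:ℝ)..T, f s * g s) ≤
      Real.sqrt (∫ s in (0:ℝ)..T, f s ^ 2) * Real.sqrt (∫ s in (0:ℝ)..T, g s ^ 2) := by
  set A := ∫ s in (0:ℝ)..T, f s ^ 2 with hAdef
  set B := ∫ s in (0:ℝ)..T, g s ^ 2 with hBdef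
  set C := ∫ s in (0:ℝ)..T, f s * g s with hCdef
  have hif : IntervalIntegrable (fun s => f s ^ 2) MeasureTheory.volume 0 T :=
    (hf.pow 2).intervalIntegrable 0 T
  have hig : IntervalIntegrable (fun s => g s ^ 2) MeasureTheory.volume 0 T :=
    (hg.pow 2).intervalIntegrable 0 T
  have hifg : IntervalIntegrable (fun s => f s * g s) MeasureTheory.volume 0 T :=
    (hf.mul hg).intervalIntegrable 0 T
  have key : ∀ l : ℝ, 0 ≤ l ^ 2 * A - 2 * l * C + B := by
    intro l
    have h0 : 0 ≤ ∫ s in (0:ℝ)..T, (l * f s - g s) ^ 2 :=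
      intervalIntegral.integral_nonneg hT.le (fun x _ => sq_nonneg _)
    have heq : (∫ s in (0:ℝ)..T, (l * f s - g s) ^ 2)
        = l ^ 2 * A - 2 * l * C + B := by
      have h1 : ∀ s, (l * f s - g s) ^ 2
          = l ^ 2 * f s ^ 2 - 2 * l * (f s * g s) + g s ^ 2 := fun s => by ring
      simp_rw [h1]
      rw [intervalIntegral.integral_add ((hif.const_mul _).sub (hifg.const_mul _)) hig,
        intervalIntegral.integral_sub (hif.const_mul _) (hifg.const_mul _),
        intervalIntegral.integral_const_mul, intervalIntegral.integral_const_mul]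
    linarith [heq ▸ h0]
  have hC2 : C ^ 2 ≤ A * B := by
    have h := key (C / A)
    have h2 : (C / A) ^ 2 * A - 2 * (C / A) * C + B = B - C ^ 2 / A := by
      field_simp; ring
    rw [h2] at h
    have : C ^ 2 / A ≤ B := by linarith
    calc C ^ 2 = C ^ 2 / A * A := by field_simp
    _ ≤ B * A := mul_le_mul_of_nonneg_right this hA.le
    _ = A * B := mul_comm _ _
  have hB : 0 ≤ B := intervalIntegral.integral_nonneg hT.le (fun x _ => sq_nonneg _)
  rcases le_or_gt C 0 with h | h
  · exact h.trans (mul_nonneg (Real.sqrt_nonneg _) (Real.sqrt_nonneg _))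
  · calc C = Real.sqrt (C ^ 2) := by rw [Real.sqrt_sq h.le]
    _ ≤ Real.sqrt (A * B) := Real.sqrt_le_sqrt hC2
    _ = Real.sqrt A * Real.sqrt B := Real.sqrt_mul hA.le _

theorem stmt_13 (T β τ k : ℝ) (hT : 0 < T) (hβ : 0 < β) (hτ : 0 < τ) (hk : 0 < k)
    (V W : ℝ → ℝ) (hVcont : Continuous V) (hVpos : ∀ t, 0 < V t) (hWpos : ∀ t, 0 < W t)
    (hVper : Function.Periodic V T) (hWper : Function.Periodic W T)
    (hW : ∀ t : ℝ, HasDerivAt W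
      (Real.sqrt (β*τ) / k * Real.sqrt (W t) * (V t - W t)) t) :
    (∫ s in (0:ℝ)..T, Real.sqrt (V s)) ≤ (∫ s in (0:ℝ)..T, Real.sqrt (W s)) ∧
    (∫ s in (0:ℝ)..T, Real.sqrt (W s)) ≤ T * Real.sqrt ((1/T) * ∫ s in (0:ℝ)..T, V s) := by
  set c : ℝ := Real.sqrt (β * τ) / k with hc
  have hcpos : 0 < c := div_pos (Real.sqrt_pos.2 (mul_pos hβ hτ)) hk
  have hWcont : Continuous W := by
    rw [continuous_iff_continuousAt]
    exact fun t => (hW t).differentiableAt.continuousAt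
  have hsW : Continuous (fun t => Real.sqrt (W t)) := Real.continuous_sqrt.comp hWcont
  have hsWpos : ∀ t, 0 < Real.sqrt (W t) := fun t => Real.sqrt_pos.2 (hWpos t)
  have hWT : W T = W 0 := by simpa using hWper 0
  -- Step A : ∫ V = ∫ W
  have stepA : (∫ s in (0:ℝ)..T, V s) = ∫ s in (0:ℝ)..T, W s := by
    have hderiv : ∀ t ∈ Set.uIcc (0:ℝ) T,
        HasDerivAt (fun t => 2 * Real.sqrt (W t)) (c * (V t - W t)) t := by
      intro t _
      have h1 := (Real.hasDerivAt_sqrt (hWpos t).ne').comp t (hW t)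
      have h2 := h1.const_mul (2:ℝ)
      refine h2.congr_deriv ?_
      have hs : Real.sqrt (W t) ≠ 0 := (hsWpos t).ne'
      field_simp
    have hint : IntervalIntegrable (fun t => c * (V t - W t)) MeasureTheory.volume 0 T :=
      (continuous_const.mul (hVcont.sub hWcont)).intervalIntegrable 0 T
    have := intervalIntegral.integral_eq_sub_of_hasDerivAt hderiv hint
    rw [hWT] at this
    have h0 : (∫ t in (0:ℝ)..T, c * (V t - W t)) = 0 := by rw [this]; ring
    rw [intervalIntegral.integral_const_mul] at h0
    have h1 : (∫ t in (0:ℝ)..T, V t - W t) = 0 :=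
      (mul_eq_zero.1 h0).resolve_left hcpos.ne'
    rw [intervalIntegral.integral_sub (hVcont.intervalIntegrable 0 T)
      (hWcont.intervalIntegrable 0 T)] at h1
    linarith
  -- Step B : ∫ V/√W = ∫ √W
  have hVdivcont : Continuous (fun t => V t / Real.sqrt (W t)) :=
    hVcont.div hsW (fun t => (hsWpos t).ne')
  have stepB : (∫ s in (0:ℝ)..T, V s / Real.sqrt (W s)) = ∫ s in (0:ℝ)..T, Real.sqrt (W s) := by
    have hderiv : ∀ t ∈ Set.uIcc (0:ℝ) T,
        HasDerivAt (fun t => (1 / c) * Real.log (W t))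
          (V t / Real.sqrt (W t) - Real.sqrt (W t)) t := by
      intro t _
      have h1 := (Real.hasDerivAt_log (hWpos t).ne').comp t (hW t)
      have h2 := h1.const_mul (1 / c)
      refine h2.congr_deriv ?_
      have hWs : Real.sqrt (W t) * Real.sqrt (W t) = W t := Real.mul_self_sqrt (hWpos t).le
      have hs : Real.sqrt (W t) ≠ 0 := (hsWpos t).ne'
      rw [← hWs]
      field_simp
      rw [Real.sqrt_sq (hsWpos t).le]
    have hint : IntervalIntegrable (fun t => V t / Real.sqrt (W t) - Real.sqrt (W t))
        MeasureTheory.volume 0 T := (hVdivcont.sub hsW).intervalIntegrable 0 T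
    have := intervalIntegral.integral_eq_sub_of_hasDerivAt hderiv hint
    rw [hWT] at this
    have h0 : (∫ t in (0:ℝ)..T, (V t / Real.sqrt (W t) - Real.sqrt (W t))) = 0 := by
      rw [this]; ring
    rw [intervalIntegral.integral_sub (hVdivcont.intervalIntegrable 0 T)
      (hsW.intervalIntegrable 0 T)] at h0
    linarith
  -- positivity of S = ∫ √W
  have hSpos : 0 < ∫ s in (0:ℝ)..T, Real.sqrt (W s) :=
    intervalIntegral_pos_of_pos (hsW.intervalIntegrable 0 T) hsWpos hT
  constructor
  · -- first inequality
    have hf : Continuous (fun t => Real.sqrt (V t / Real.sqrt (W t))) :=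
      Real.continuous_sqrt.comp hVdivcont
    have hg : Continuous (fun t => Real.sqrt (Real.sqrt (W t))) :=
      Real.continuous_sqrt.comp hsW
    have hf2 : (fun s => Real.sqrt (V s / Real.sqrt (W s)) ^ 2)
        = fun s => V s / Real.sqrt (W s) := by
      funext s
      exact Real.sq_sqrt (div_nonneg (hVpos s).le (Real.sqrt_nonneg _))
    have hg2 : (fun s => Real.sqrt (Real.sqrt (W s)) ^ 2) = fun s => Real.sqrt (W s) := by
      funext s; exact Real.sq_sqrt (Real.sqrt_nonneg _)
    have hfg : (fun s => Real.sqrt (V s / Real.sqrt (W s)) * Real.sqrt (Real.sqrt (W s)))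
        = fun s => Real.sqrt (V s) := by
      funext s
      rw [← Real.sqrt_mul (div_nonneg (hVpos s).le (Real.sqrt_nonneg _)),
        div_mul_cancel₀ _ (hsWpos s).ne']
    have hA : 0 < ∫ s in (0:ℝ)..T, Real.sqrt (V s / Real.sqrt (W s)) ^ 2 := by
      rw [hf2, stepB]; exact hSpos
    have := cs_aux T hT _ _ hf hg hA
    rw [hf2, hg2, stepB] at this
    calc (∫ s in (0:ℝ)..T, Real.sqrt (V s))
        = ∫ s in (0:ℝ)..T, Real.sqrt (V s / Real.sqrt (W s)) * Real.sqrt (Real.sqrt (W s)) := by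
          rw [hfg]
    _ ≤ Real.sqrt (∫ s in (0:ℝ)..T, Real.sqrt (W s)) *
          Real.sqrt (∫ s in (0:ℝ)..T, Real.sqrt (W s)) := this
    _ = ∫ s in (0:ℝ)..T, Real.sqrt (W s) := Real.mul_self_sqrt hSpos.le
  · -- second inequality
    have hf2 : (fun s => Real.sqrt (W s) ^ 2) = fun s => W s := by
      funext s; exact Real.sq_sqrt (hWpos s).le
    have hA : 0 < ∫ s in (0:ℝ)..T, Real.sqrt (W s) ^ 2 := by
      rw [hf2]
      exact intervalIntegral_pos_of_pos (hWcont.intervalIntegrable 0 T) hWpos hT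
    have hcs := cs_aux T hT (fun t => Real.sqrt (W t)) (fun _ => 1) hsW continuous_const hA
    simp only [mul_one, one_pow] at hcs
    rw [hf2] at hcs
    have hconst : (∫ s in (0:ℝ)..T, (1:ℝ)) = T := by simp
    rw [hconst, ← stepA] at hcs
    have hIV : 0 ≤ ∫ s in (0:ℝ)..T, V s :=
      intervalIntegral.integral_nonneg hT.le (fun x _ => (hVpos x).le)
    have hrhs : T * Real.sqrt ((1/T) * ∫ s in (0:ℝ)..T, V s)
        = Real.sqrt (∫ s in (0:ℝ)..T, V s) * Real.sqrt T := by
      have hsT : (0:ℝ) < Real.sqrt T := Real.sqrt_pos.2 hT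
      rw [one_div, Real.sqrt_mul (inv_nonneg.2 hT.le), Real.sqrt_inv]
      calc T * ((Real.sqrt T)⁻¹ * Real.sqrt (∫ s in (0:ℝ)..T, V s))
          = (T / Real.sqrt T) * Real.sqrt (∫ s in (0:ℝ)..T, V s) := by ring
      _ = Real.sqrt T * Real.sqrt (∫ s in (0:ℝ)..T, V s) := by rw [Real.div_sqrt]
      _ = Real.sqrt (∫ s in (0:ℝ)..T, V s) * Real.sqrt T := mul_comm _ _
    rw [hrhs]
    exact hcs
end
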